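/- Let f(x,y) = x + √(x² + y²) on ℝ². Then f is convex and nonnegative, its zero set is {(x,0) : x ≤ 0}, and f does not admit a Lipschitz global error bound: there is no τ > 0 with dist((x,y), {f ≤ 0}) ≤ τ f(x,y) for all (x,y). -/

import Mathlib

theorem stmt5 (f : EuclideanSpace ℝ (Fin 2) → ℝ)
    (hf : ∀ p, f p = p 0 + Real.sqrt ((p 0)^2 + (p 1)^2)) :
    ConvexOn ℝ Set.univ f ∧ (∀ p, 0 ≤ f p) ∧
    {p | f p = 0} = {p : EuclideanSpace ℝ (Fin 2) | p 0 ≤ 0 ∧ p 1 = 0} ∧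
    ¬ ∃ τ > (0:ℝ), ∀ p, Metric.infDist p {q | f q ≤ 0} ≤ τ * f p := by
  have hnorm : ∀ p : EuclideanSpace ℝ (Fin 2),
      Real.sqrt ((p 0)^2 + (p 1)^2) = ‖p‖ := by
    intro p
    rw [EuclideanSpace.norm_eq]
    simp [Fin.sum_univ_two, Real.norm_eq_abs, sq_abs]
  have hf' : ∀ p, f p = p 0 + ‖p‖ := fun p => by rw [hf, hnorm]
  -- nonnegativity
  have hnn : ∀ p, 0 ≤ f p := by
    intro p
    rw [hf p]
    have h1 : |p 0| ≤ Real.sqrt ((p 0)^2 + (p 1)^2) := by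
      rw [← Real.sqrt_sq_eq_abs]
      exact Real.sqrt_le_sqrt (by nlinarith [sq_nonneg (p 1)])
    have := neg_abs_le (p 0)
    linarith
  refine ⟨?_, hnn, ?_, ?_⟩
  · -- convexity
    refine ⟨convex_univ, fun x _ y _ a b ha hb hab => ?_⟩
    simp only [hf']
    have h1 : (a • x + b • y) 0 = a * x 0 + b * y 0 := by
      simp [PiLp.add_apply, PiLp.smul_apply]
    have h2 : ‖a • x + b • y‖ ≤ a * ‖x‖ + b * ‖y‖ := by
      calc ‖a • x + b • y‖ ≤ ‖a • x‖ + ‖b • y‖ := norm_add_le _ _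
        _ = a * ‖x‖ + b * ‖y‖ := by
            rw [norm_smul, norm_smul, Real.norm_eq_abs, Real.norm_eq_abs,
              abs_of_nonneg ha, abs_of_nonneg hb]
    simp only [smul_eq_mul]
    rw [h1]
    linarith
  · -- zero set
    ext p
    simp only [Set.mem_setOf_eq, hf p]
    constructor
    · intro h
      have hs : Real.sqrt ((p 0)^2 + (p 1)^2) = -(p 0) := by linarith
      have h0 : 0 ≤ -(p 0) := hs ▸ Real.sqrt_nonneg _
      have hsq : (p 0)^2 + (p 1)^2 = (p 0)^2 := by
        have := Real.sq_sqrt (by positivity : (0:ℝ) ≤ (p 0)^2 + (p 1)^2)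
        rw [hs] at this
        nlinarith
      have : p 1 = 0 := by nlinarith [sq_nonneg (p 1)]
      exact ⟨by linarith, this⟩
    · rintro ⟨h0, h1⟩
      rw [h1]
      rw [show (p 0)^2 + 0^2 = (p 0)^2 by ring, Real.sqrt_sq_eq_abs,
        abs_of_nonpos h0]
      ring
  · -- no Lipschitz error bound
    rintro ⟨τ, hτ, h⟩
    set k : ℝ := τ + 1 with hk
    have hk1 : (1:ℝ) ≤ k := by linarith
    have hk0 : (0:ℝ) < k := by linarith
    set p : EuclideanSpace ℝ (Fin 2) := WithLp.toLp 2 ![-k, 1] with hp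
    have hp0 : p 0 = -k := rfl
    have hp1 : p 1 = 1 := rfl
    have hfp : f p = Real.sqrt (k^2 + 1) - k := by
      rw [hf p, hp0, hp1]; ring_nf
    -- f p < 1/k
    have hfp_lt : f p < 1 / k := by
      rw [hfp]
      have : Real.sqrt (k^2 + 1) < k + 1/k := by
        rw [show k + 1/k = Real.sqrt ((k + 1/k)^2) from
          (Real.sqrt_sq (by positivity)).symm]
        apply Real.sqrt_lt_sqrt (by positivity)
        have e : (k + 1/k)^2 = k^2 + 2 + (1/k)^2 := by field_simp; ring
        nlinarith [sq_nonneg (1/k), e]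
      linarith
    -- infDist lower bound
    have hmem : (0 : EuclideanSpace ℝ (Fin 2)) ∈ {q | f q ≤ 0} := by
      simp only [Set.mem_setOf_eq, hf']
      simp
    have hlb : (1:ℝ) ≤ Metric.infDist p {q | f q ≤ 0} := by
      by_contra hc
      push_neg at hc
      rw [Metric.infDist_lt_iff ⟨_, hmem⟩] at hc
      obtain ⟨q, hq, hdq⟩ := hc
      refine absurd hdq (not_lt.mpr ?_)
      have hq0 : f q = 0 := le_antisymm hq (hnn q)
      have hq1 : q 1 = 0 := by
        rw [hf q] at hq0
        have hs : Real.sqrt ((q 0)^2 + (q 1)^2) = -(q 0) := by linarith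
        have hsq : (q 0)^2 + (q 1)^2 = (q 0)^2 := by
          have := Real.sq_sqrt (by positivity : (0:ℝ) ≤ (q 0)^2 + (q 1)^2)
          rw [hs] at this
          nlinarith
        nlinarith [sq_nonneg (q 1)]
      have hd : dist p q = Real.sqrt ((p 0 - q 0)^2 + (p 1 - q 1)^2) := by
        rw [EuclideanSpace.dist_eq]
        simp [Fin.sum_univ_two, Real.dist_eq, sq_abs]
      rw [hd, hp1, hq1]
      have h9 : (1:ℝ) ≤ (p 0 - q 0)^2 + (1 - 0)^2 := by
        nlinarith [sq_nonneg (p 0 - q 0)]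
      calc (1:ℝ) = Real.sqrt 1 := Real.sqrt_one.symm
        _ ≤ _ := Real.sqrt_le_sqrt h9
    have hub := h p
    have : τ * f p < τ * (1/k) := by
      apply mul_lt_mul_of_pos_left hfp_lt hτ
    have hτk : τ * (1/k) < 1 := by
      rw [mul_one_div, div_lt_one hk0]; linarith
    linarith
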